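/- The q-exponential series f(z;q) = ∑_{n≥0} (1-q)^n z^n / ((1-q)(1-q^2)···(1-q^n)) equals the infinite product ∏_{n≥0} (1 - (1-q) z q^n)^{-1} as formal power series in z (for |q|<1, or in ℂ[[q]][[z]]). -/

import Mathlib

open Filter Finset

namespace QexpAux

noncomputable def B (q : ℂ) (n : ℕ) : ℂ := ∏ k ∈ Finset.range n, (1 - q ^ (k + 1))

lemma B_eq_Icc (q : ℂ) (n : ℕ) : B q n = ∏ k ∈ Finset.Icc 1 n, (1 - q ^ k) := by
  induction n with
  | zero => simp [B]
  | succ n ih =>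
    rw [B, Finset.prod_range_succ, Finset.prod_Icc_succ_top (by omega), ← B, ih]

-- uniform positive lower bound
lemma exists_c (q : ℂ) (hq : ‖q‖ < 1) :
    ∃ c : ℝ, 0 < c ∧ ∀ n, c ≤ ∏ k ∈ Finset.range n, (1 - ‖q‖ ^ (k + 1)) := by
  have hq0 : (0:ℝ) ≤ ‖q‖ := norm_nonneg q
  have hpos : ∀ k : ℕ, (0:ℝ) < 1 - ‖q‖ ^ (k + 1) := by
    intro k
    have : ‖q‖ ^ (k+1) < 1 := pow_lt_one₀ hq0 hq (by omega)
    linarith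
  set f : ℕ → Unit → ℝ := fun k _ => 1 - ‖q‖ ^ (k + 1) with hf
  have hsum : Summable fun k : ℕ => Real.log (1 - ‖q‖ ^ (k + 1)) := by
    apply Summable.of_norm_bounded (g := fun k : ℕ => (1 - ‖q‖)⁻¹ * ‖q‖ ^ (k+1))
    · exact ((summable_geometric_of_lt_one hq0 hq).mul_left _).comp_injective
        (add_left_injective 1)
    · intro k
      have h1 := hpos k
      have hlog : Real.log (1 - ‖q‖ ^ (k+1)) ≤ 0 := by
        apply Real.log_nonpos (by linarith)
        have := pow_nonneg hq0 (k+1); linarith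
      rw [Real.norm_eq_abs, abs_of_nonpos hlog]
      have : -Real.log (1 - ‖q‖ ^ (k+1)) = Real.log (1 - ‖q‖ ^ (k+1))⁻¹ := by
        rw [Real.log_inv]
      rw [this]
      have hle : Real.log (1 - ‖q‖ ^ (k+1))⁻¹ ≤ (1 - ‖q‖ ^ (k+1))⁻¹ - 1 :=
        Real.log_le_sub_one_of_pos (by positivity)
      have : (1 - ‖q‖ ^ (k+1))⁻¹ - 1 = ‖q‖^(k+1) / (1 - ‖q‖ ^ (k+1)) := by
        rw [eq_div_iff (ne_of_gt h1), sub_mul, inv_mul_cancel₀ (ne_of_gt h1)]; ring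
      rw [this] at hle
      refine hle.trans ?_
      rw [div_eq_inv_mul]
      apply mul_le_mul_of_nonneg_right _ (by positivity)
      apply inv_anti₀ (by linarith [hpos k])
      have h2 : ‖q‖ ^ (k+1) ≤ ‖q‖ := by
        calc ‖q‖ ^ (k+1) ≤ ‖q‖ ^ 1 := pow_le_pow_of_le_one hq0 hq.le (by omega)
        _ = ‖q‖ := pow_one _
      linarith
  have hprod : HasProd (fun k : ℕ => 1 - ‖q‖ ^ (k + 1)) (∏' k : ℕ, (1 - ‖q‖ ^ (k + 1))) := by
    exact (Real.multipliable_of_summable_log (fun k => hpos k) hsum).hasProd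
  set c := ∏' k : ℕ, (1 - ‖q‖ ^ (k + 1)) with hc
  have hcpos : 0 < c := by
    have h2 := Real.rexp_tsum_eq_tprod (fun k => hpos k) hsum
    rw [hc, ← h2]
    exact Real.exp_pos _
  refine ⟨c, hcpos, fun n => ?_⟩
  have htend := hprod.tendsto_prod_nat
  refine le_of_tendsto htend ?_
  filter_upwards [eventually_ge_atTop n] with m hm
  have hsub : Finset.range n ⊆ Finset.range m := Finset.range_subset_range.2 hm
  rw [← Finset.prod_sdiff hsub]
  apply mul_le_of_le_one_left (Finset.prod_nonneg (fun k _ => (hpos k).le))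
  apply Finset.prod_le_one
  · intro k _; exact (hpos k).le
  · intro k _; have := pow_nonneg (norm_nonneg q) (k+1); linarith

lemma norm_B_ge (q : ℂ) (hq : ‖q‖ < 1) {c : ℝ}
    (hc : ∀ n, c ≤ ∏ k ∈ Finset.range n, (1 - ‖q‖ ^ (k + 1))) (n : ℕ) :
    c ≤ ‖B q n‖ := by
  refine (hc n).trans ?_
  rw [B, norm_prod]
  apply Finset.prod_le_prod
  · intro k _
    have : ‖q‖ ^ (k+1) < 1 := pow_lt_one₀ (norm_nonneg q) hq (by omega)
    linarith
  · intro k _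
    calc 1 - ‖q‖ ^ (k+1) = 1 - ‖q ^ (k+1)‖ := by rw [norm_pow]
    _ ≤ ‖1 - q ^ (k+1)‖ := by
        have := norm_sub_norm_le (1 : ℂ) (q ^ (k+1))
        simpa using this

lemma B_ne_zero (q : ℂ) (hq : ‖q‖ < 1) (n : ℕ) : B q n ≠ 0 := by
  obtain ⟨c, hc0, hc⟩ := exists_c q hq
  have := norm_B_ge q hq hc n
  intro h; rw [h] at this; simp at this; linarith

lemma summable_S (q : ℂ) (hq : ‖q‖ < 1) {c : ℝ} (hc0 : 0 < c)
    (hc : ∀ n, c ≤ ∏ k ∈ Finset.range n, (1 - ‖q‖ ^ (k + 1)))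
    {u : ℂ} (hu : ‖u‖ < 1) : Summable (fun n : ℕ => u ^ n / B q n) := by
  apply Summable.of_norm_bounded (g := fun n : ℕ => c⁻¹ * ‖u‖ ^ n)
  · exact (summable_geometric_of_lt_one (norm_nonneg u) hu).mul_left _
  · intro n
    rw [norm_div, norm_pow]
    have hB := norm_B_ge q hq hc n
    calc ‖u‖ ^ n / ‖B q n‖ ≤ ‖u‖ ^ n / c := by
          apply div_le_div_of_nonneg_left (pow_nonneg (norm_nonneg u) n) hc0 hB
    _ = c⁻¹ * ‖u‖ ^ n := by rw [div_eq_mul_inv, mul_comm]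


lemma B_def (q : ℂ) (n : ℕ) : B q n = ∏ k ∈ Finset.range n, (1 - q ^ (k + 1)) := rfl

noncomputable def S (q u : ℂ) : ℂ := ∑' n : ℕ, u ^ n / B q n

lemma B_succ (q : ℂ) (n : ℕ) : B q (n+1) = B q n * (1 - q ^ (n+1)) := by
  rw [B_def, B_def, Finset.prod_range_succ]

lemma funeq (q : ℂ) (hq : ‖q‖ < 1) {c : ℝ} (hc0 : 0 < c)
    (hc : ∀ n, c ≤ ∏ k ∈ Finset.range n, (1 - ‖q‖ ^ (k + 1)))
    {u : ℂ} (hu : ‖u‖ < 1) : (1 - u) * S q u = S q (q * u) := by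
  have hqu : ‖q * u‖ < 1 := by
    rw [norm_mul]
    calc ‖q‖ * ‖u‖ ≤ 1 * ‖u‖ := by
          apply mul_le_mul_of_nonneg_right hq.le (norm_nonneg u)
    _ = ‖u‖ := one_mul _
    _ < 1 := hu
  have hS1 : Summable (fun n : ℕ => u ^ n / B q n) := summable_S q hq hc0 hc hu
  have hS2 : Summable (fun n : ℕ => (q*u) ^ n / B q n) := summable_S q hq hc0 hc hqu
  have hqn : ∀ n : ℕ, (1 : ℂ) - q ^ (n+1) ≠ 0 := by
    intro n h
    have h1 : q ^ (n+1) = 1 := by linear_combination -h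
    have : ‖q ^ (n+1)‖ < 1 := by
      rw [norm_pow]; exact pow_lt_one₀ (norm_nonneg q) hq (by omega)
    rw [h1] at this; simp at this
  have key : S q u - S q (q*u) = u * S q u := by
    rw [S, S, ← Summable.tsum_sub hS1 hS2]
    set g := fun n : ℕ => u ^ n / B q n - (q*u) ^ n / B q n with hgdef
    have hg : Summable g := hS1.sub hS2
    rw [Summable.tsum_eq_zero_add hg]
    have hg0 : g 0 = 0 := by simp [hgdef]
    rw [hg0, zero_add]
    have hstep : ∀ n : ℕ, g (n+1) = u * (u ^ n / B q n) := by
      intro n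
      have hBn : B q n ≠ 0 := B_ne_zero q hq n
      have h1 : (1:ℂ) - q ^ (n+1) ≠ 0 := hqn n
      simp only [hgdef, B_succ, mul_pow]
      rw [← sub_div]
      have h2 : u ^ (n+1) - q ^ (n+1) * u ^ (n+1) = u ^ (n+1) * (1 - q ^ (n+1)) := by ring
      rw [h2, mul_div_mul_right _ _ h1, pow_succ', mul_div_assoc]
    calc ∑' n : ℕ, g (n+1) = ∑' n : ℕ, u * (u ^ n / B q n) := tsum_congr hstep
    _ = u * ∑' n : ℕ, u ^ n / B q n := tsum_mul_left
    _ = u * S q u := rfl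
  linear_combination key

lemma iterate (q : ℂ) (hq : ‖q‖ < 1) {c : ℝ} (hc0 : 0 < c)
    (hc : ∀ n, c ≤ ∏ k ∈ Finset.range n, (1 - ‖q‖ ^ (k + 1)))
    {u : ℂ} (hu : ‖u‖ < 1) (N : ℕ) :
    (∏ n ∈ Finset.range N, (1 - q ^ n * u)) * S q u = S q (q ^ N * u) := by
  induction N with
  | zero => simp
  | succ N ih =>
    rw [Finset.prod_range_succ, mul_comm (∏ n ∈ Finset.range N, (1 - q ^ n * u)),
      mul_assoc, ih]
    have hv : ‖q ^ N * u‖ < 1 := by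
      rw [norm_mul, norm_pow]
      calc ‖q‖ ^ N * ‖u‖ ≤ 1 * ‖u‖ := by
            apply mul_le_mul_of_nonneg_right (pow_le_one₀ (norm_nonneg q) hq.le) (norm_nonneg u)
      _ = ‖u‖ := one_mul _
      _ < 1 := hu
    have := funeq q hq hc0 hc hv
    rw [this]
    ring_nf

lemma S_tendsto_one (q : ℂ) (hq : ‖q‖ < 1) {c : ℝ} (hc0 : 0 < c)
    (hc : ∀ n, c ≤ ∏ k ∈ Finset.range n, (1 - ‖q‖ ^ (k + 1)))
    {u : ℂ} (hu : ‖u‖ < 1) :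
    Tendsto (fun N : ℕ => S q (q ^ N * u)) atTop (nhds 1) := by
  have hbound : ∀ v : ℂ, ‖v‖ ≤ ‖u‖ → ‖S q v - 1‖ ≤ ‖v‖ * (c⁻¹ * (1 - ‖u‖)⁻¹) := by
    intro v hv
    have hv1 : ‖v‖ < 1 := lt_of_le_of_lt hv hu
    have hS : Summable (fun n : ℕ => v ^ n / B q n) := summable_S q hq hc0 hc hv1
    have h0 : S q v - 1 = ∑' n : ℕ, v ^ (n+1) / B q (n+1) := by
      rw [S, Summable.tsum_eq_zero_add hS]
      simp [B_def]
    rw [h0]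
    have h1 : ∀ n : ℕ, ‖v ^ (n+1) / B q (n+1)‖ ≤ ‖v‖ * (c⁻¹ * ‖u‖ ^ n) := by
      intro n
      rw [norm_div, norm_pow]
      have hB := norm_B_ge q hq hc (n+1)
      calc ‖v‖ ^ (n+1) / ‖B q (n+1)‖ ≤ ‖v‖ ^ (n+1) / c :=
            div_le_div_of_nonneg_left (pow_nonneg (norm_nonneg v) _) hc0 hB
      _ = ‖v‖ * (‖v‖ ^ n / c) := by rw [pow_succ']; ring
      _ ≤ ‖v‖ * (‖u‖ ^ n / c) := by gcongr
      _ = ‖v‖ * (c⁻¹ * ‖u‖ ^ n) := by ring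
    have hgs : Summable (fun n : ℕ => ‖v‖ * (c⁻¹ * ‖u‖ ^ n)) :=
      (((summable_geometric_of_lt_one (norm_nonneg u) hu).mul_left c⁻¹).mul_left ‖v‖)
    calc ‖∑' n : ℕ, v ^ (n+1) / B q (n+1)‖ ≤ ∑' n : ℕ, ‖v‖ * (c⁻¹ * ‖u‖ ^ n) := by
          apply tsum_of_norm_bounded hgs.hasSum h1
    _ = ‖v‖ * (c⁻¹ * ∑' n : ℕ, ‖u‖ ^ n) := by rw [tsum_mul_left, tsum_mul_left]
    _ = ‖v‖ * (c⁻¹ * (1 - ‖u‖)⁻¹) := by rw [tsum_geometric_of_lt_one (norm_nonneg u) hu]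
  have h2 : Tendsto (fun N : ℕ => ‖q‖ ^ N) atTop (nhds 0) :=
    tendsto_pow_atTop_nhds_zero_of_lt_one (norm_nonneg q) hq
  have hlim : Tendsto (fun N : ℕ => ‖q‖ ^ N * (‖u‖ * (c⁻¹ * (1 - ‖u‖)⁻¹))) atTop (nhds 0) := by
    simpa using h2.mul_const (‖u‖ * (c⁻¹ * (1 - ‖u‖)⁻¹))
  have hdiff : Tendsto (fun N : ℕ => S q (q ^ N * u) - 1) atTop (nhds 0) := by
    apply squeeze_zero_norm _ hlim
    intro N
    have hNle : ‖q ^ N * u‖ ≤ ‖u‖ := by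
      rw [norm_mul, norm_pow]
      calc ‖q‖ ^ N * ‖u‖ ≤ 1 * ‖u‖ :=
            mul_le_mul_of_nonneg_right (pow_le_one₀ (norm_nonneg q) hq.le) (norm_nonneg u)
      _ = ‖u‖ := one_mul _
    refine (hbound _ hNle).trans_eq ?_
    rw [norm_mul, norm_pow]; ring
  have h3 := hdiff.add_const 1
  simpa using h3

lemma factor_ne (q u : ℂ) (hq : ‖q‖ < 1) (hu : ‖u‖ < 1) (n : ℕ) :
    (1 : ℂ) - q ^ n * u ≠ 0 := by
  intro h
  have h1 : q ^ n * u = 1 := by linear_combination -h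
  have h2 : ‖q ^ n * u‖ < 1 := by
    rw [norm_mul, norm_pow]
    calc ‖q‖ ^ n * ‖u‖ ≤ 1 * ‖u‖ :=
          mul_le_mul_of_nonneg_right (pow_le_one₀ (norm_nonneg q) hq.le) (norm_nonneg u)
    _ = ‖u‖ := one_mul _
    _ < 1 := hu
  rw [h1] at h2; simp at h2

lemma hasProd_inv (q u : ℂ) (hq : ‖q‖ < 1) (hu : ‖u‖ < 1) :
    HasProd (fun n : ℕ => ((1 : ℂ) - q ^ n * u)⁻¹)
      (∏' n : ℕ, ((1 : ℂ) - q ^ n * u)⁻¹) := by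
  set g : ℕ → ℂ := fun n => ((1 : ℂ) - q ^ n * u)⁻¹ - 1 with hgdef
  have hden : ∀ n : ℕ, (1 : ℕ) ≤ 1 → (1:ℝ) - ‖u‖ ≤ ‖(1 : ℂ) - q ^ n * u‖ := by
    intro n _
    have h2 : ‖q ^ n * u‖ ≤ ‖u‖ := by
      rw [norm_mul, norm_pow]
      calc ‖q‖ ^ n * ‖u‖ ≤ 1 * ‖u‖ :=
            mul_le_mul_of_nonneg_right (pow_le_one₀ (norm_nonneg q) hq.le) (norm_nonneg u)
      _ = ‖u‖ := one_mul _
    have := norm_sub_norm_le (1 : ℂ) (q ^ n * u)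
    simp only [norm_one] at this
    linarith
  have hgbound : ∀ n : ℕ, ‖g n‖ ≤ (‖u‖ / (1 - ‖u‖)) * ‖q‖ ^ n := by
    intro n
    have hne := factor_ne q u hq hu n
    have hd := hden n le_rfl
    have hgn : g n = q ^ n * u / (1 - q ^ n * u) := by
      rw [hgdef]
      field_simp
      ring
    rw [hgn, norm_div, norm_mul, norm_pow]
    rw [div_le_iff₀ (by linarith)]
    have h10 : (1:ℝ) - ‖u‖ ≠ 0 := by linarith
    calc ‖q‖ ^ n * ‖u‖ = (‖u‖ / (1 - ‖u‖)) * ‖q‖ ^ n * (1 - ‖u‖) := by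
          rw [div_mul_eq_mul_div, div_mul_eq_mul_div, mul_div_assoc, div_self h10]; ring
    _ ≤ (‖u‖ / (1 - ‖u‖)) * ‖q‖ ^ n * ‖1 - q ^ n * u‖ := by
          apply mul_le_mul_of_nonneg_left hd
          exact mul_nonneg (div_nonneg (norm_nonneg u) (by linarith)) (pow_nonneg (norm_nonneg q) n)
  have hsmall : ∀ᶠ n : ℕ in atTop, ‖g n‖ ≤ 1/2 := by
    have ht : Tendsto (fun n : ℕ => (‖u‖ / (1 - ‖u‖)) * ‖q‖ ^ n) atTop (nhds 0) := by
      simpa using (tendsto_pow_atTop_nhds_zero_of_lt_one (norm_nonneg q) hq).const_mul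
        (‖u‖ / (1 - ‖u‖))
    filter_upwards [ht.eventually_le_const (by norm_num : (0:ℝ) < 1/2)] with n hn
    exact (hgbound n).trans hn
  have hlogsum : Summable (fun n : ℕ => Complex.log (((1 : ℂ) - q ^ n * u)⁻¹)) := by
    apply Summable.of_norm_bounded_eventually_nat
      (g := fun n => (3/2) * ((‖u‖ / (1 - ‖u‖)) * ‖q‖ ^ n))
    · exact ((summable_geometric_of_lt_one (norm_nonneg q) hq).mul_left _).mul_left _
    · filter_upwards [hsmall] with n hn
      have : ((1 : ℂ) - q ^ n * u)⁻¹ = 1 + g n := by rw [hgdef]; ring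
      rw [this]
      calc ‖Complex.log (1 + g n)‖ ≤ (3/2) * ‖g n‖ :=
            Complex.norm_log_one_add_half_le_self hn
      _ ≤ (3/2) * ((‖u‖ / (1 - ‖u‖)) * ‖q‖ ^ n) := by
            apply mul_le_mul_of_nonneg_left (hgbound n) (by norm_num)
  exact (Complex.multipliable_of_summable_log hlogsum).hasProd



end QexpAux

open QexpAux

theorem qexp_series_eq_product (q z : ℂ) (hq : ‖q‖ < 1) (hz : ‖(1 - q) * z‖ < 1) :
    ∑' n : ℕ, (1 - q) ^ n * z ^ n / ∏ k ∈ Finset.Icc 1 n, (1 - q ^ k)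
      = ∏' n : ℕ, (1 - (1 - q) * z * q ^ n)⁻¹ := by
  set u : ℂ := (1 - q) * z with hu
  obtain ⟨c, hc0, hc⟩ := exists_c q hq
  have hLHS : ∑' n : ℕ, (1 - q) ^ n * z ^ n / ∏ k ∈ Finset.Icc 1 n, (1 - q ^ k) = S q u := by
    apply tsum_congr
    intro n
    rw [← B_eq_Icc, hu, mul_pow]
  have hRHS : ∏' n : ℕ, (1 - (1 - q) * z * q ^ n)⁻¹ = ∏' n : ℕ, ((1 : ℂ) - q ^ n * u)⁻¹ := by
    apply tprod_congr
    intro n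
    rw [hu]; ring_nf
  rw [hLHS, hRHS]
  -- main limit argument
  have hprodne : ∀ N : ℕ, (∏ n ∈ Finset.range N, ((1:ℂ) - q ^ n * u)) ≠ 0 := by
    intro N
    exact Finset.prod_ne_zero_iff.2 (fun n _ => factor_ne q u hq hz n)
  have hSN : ∀ N : ℕ, S q u = S q (q ^ N * u) * ∏ n ∈ Finset.range N, ((1:ℂ) - q ^ n * u)⁻¹ := by
    intro N
    have := iterate q hq hc0 hc hz N
    have hQ : (∏ n ∈ Finset.range N, ((1:ℂ) - q ^ n * u)⁻¹)
        = (∏ n ∈ Finset.range N, ((1:ℂ) - q ^ n * u))⁻¹ := Finset.prod_inv_distrib _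
    rw [← this, hQ, mul_assoc, mul_comm (S q u), ← mul_assoc, mul_inv_cancel₀ (hprodne N), one_mul]
  have h1 : Tendsto (fun N : ℕ => S q (q ^ N * u) * ∏ n ∈ Finset.range N, ((1:ℂ) - q ^ n * u)⁻¹)
      atTop (nhds (1 * ∏' n : ℕ, ((1 : ℂ) - q ^ n * u)⁻¹)) :=
    (S_tendsto_one q hq hc0 hc hz).mul ((hasProd_inv q u hq hz).tendsto_prod_nat)
  have h2 : Tendsto (fun _ : ℕ => S q u) atTop (nhds (S q u)) := tendsto_const_nhds
  have := tendsto_nhds_unique (h2.congr (fun N => hSN N)) h1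
  rw [this, one_mul]
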